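/- Let m > 0 and N ≥ 2 an integer. For every real k ≠ 0: if l ≥ 0 is an even integer, then 0 ≤ S_l(k) ≤ 2π²(N−1)(m+1)·arcsin(1/(m+1)); if l ≥ 1 is an odd integer, then −4π(N−1)(m+1)·(1 − √(m(m+2))·arcsin(1/(m+1))) ≤ S_l(k) ≤ 0. -/

import Mathlib

set_option maxHeartbeats 1600000
open Real Set Polynomial intervalIntegral

/-- Legendre polynomial of degree `l` via Rodrigues' formula. -/
noncomputable def legendreP (l : ℕ) (y : ℝ) : ℝ :=
  (1 / (2 ^ l * (Nat.factorial l : ℝ))) * iteratedDeriv l (fun t : ℝ => (t ^ 2 - 1) ^ l) y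

/-- The function `S_l(k)` for `k ≠ 0`. -/
noncomputable def Sl (m : ℝ) (N l : ℕ) (k : ℝ) : ℝ :=
  2 * Real.pi ^ 2 * ((N : ℝ) - 1) *
    ∫ y in (-1 : ℝ)..(1 : ℝ),
      legendreP l y * Real.sinh (k * Real.arccos (y / (m + 1))) /
        (Real.sin (Real.arccos (y / (m + 1))) * Real.sinh (Real.pi * k))



/-- Cone of functions generated by `cosh (k θ)`, `sinh (k θ)`, `sec θ`, `tan θ`,
nonnegative constants, addition and multiplication. -/
inductive GFun (k : ℝ) : (ℝ → ℝ) → Prop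
  | cosh : GFun k (fun θ => Real.cosh (k * θ))
  | sinh : GFun k (fun θ => Real.sinh (k * θ))
  | sec : GFun k (fun θ => (Real.cos θ)⁻¹)
  | tan : GFun k (fun θ => Real.tan θ)
  | const (c : ℝ) (hc : 0 ≤ c) : GFun k (fun _ => c)
  | add {f g} : GFun k f → GFun k g → GFun k (fun θ => f θ + g θ)
  | mul {f g} : GFun k f → GFun k g → GFun k (fun θ => f θ * g θ)

lemma GFun.nonneg {k : ℝ} (hk : 0 ≤ k) {f} (hf : GFun k f) {θ : ℝ} (h0 : 0 ≤ θ)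
    (h1 : θ < π / 2) : 0 ≤ f θ := by
  have hcos : 0 < Real.cos θ :=
    Real.cos_pos_of_mem_Ioo ⟨lt_of_lt_of_le (by linarith [Real.pi_pos]) h0, h1⟩
  induction hf with
  | cosh => positivity
  | sinh => exact Real.sinh_nonneg_iff.2 (by positivity)
  | sec => positivity
  | tan => exact Real.tan_nonneg_of_nonneg_of_le_pi_div_two h0 h1.le
  | const c hc => exact hc
  | add hf hg ihf ihg => exact add_nonneg ihf ihg
  | mul hf hg ihf ihg => exact mul_nonneg ihf ihg

lemma GFun.hasDeriv {k : ℝ} (hk : 0 ≤ k) {f} (hf : GFun k f) :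
    ∃ g, GFun k g ∧ ∀ θ ∈ Ioo (-(π / 2)) (π / 2), HasDerivAt f (g θ * Real.cos θ) θ := by
  induction hf with
  | cosh =>
      refine ⟨fun θ => k * Real.sinh (k * θ) * (Real.cos θ)⁻¹,
        (GFun.const k hk).mul GFun.sinh |>.mul GFun.sec, fun θ hθ => ?_⟩
      have hcos : Real.cos θ ≠ 0 := (Real.cos_pos_of_mem_Ioo hθ).ne'
      have h : HasDerivAt (fun θ => Real.cosh (k * θ)) (Real.sinh (k * θ) * k) θ :=
        (Real.hasDerivAt_cosh (k * θ)).comp θ (by simpa using (hasDerivAt_id θ).const_mul k)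
      convert h using 1
      field_simp
  | sinh =>
      refine ⟨fun θ => k * Real.cosh (k * θ) * (Real.cos θ)⁻¹,
        (GFun.const k hk).mul GFun.cosh |>.mul GFun.sec, fun θ hθ => ?_⟩
      have hcos : Real.cos θ ≠ 0 := (Real.cos_pos_of_mem_Ioo hθ).ne'
      have h : HasDerivAt (fun θ => Real.sinh (k * θ)) (Real.cosh (k * θ) * k) θ :=
        (Real.hasDerivAt_sinh (k * θ)).comp θ (by simpa using (hasDerivAt_id θ).const_mul k)
      convert h using 1
      field_simp
  | sec =>
      refine ⟨fun θ => Real.tan θ * ((Real.cos θ)⁻¹ * (Real.cos θ)⁻¹),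
        GFun.tan.mul (GFun.sec.mul GFun.sec), fun θ hθ => ?_⟩
      have hcos : Real.cos θ ≠ 0 := (Real.cos_pos_of_mem_Ioo hθ).ne'
      have h : HasDerivAt (fun θ => (Real.cos θ)⁻¹)
          (-(-Real.sin θ) / Real.cos θ ^ 2) θ := (Real.hasDerivAt_cos θ).inv hcos
      convert h using 1
      simp only [Real.tan_eq_sin_div_cos]
      field_simp
  | tan =>
      refine ⟨fun θ => (Real.cos θ)⁻¹ * ((Real.cos θ)⁻¹ * (Real.cos θ)⁻¹),
        GFun.sec.mul (GFun.sec.mul GFun.sec), fun θ hθ => ?_⟩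
      have hcos : Real.cos θ ≠ 0 := (Real.cos_pos_of_mem_Ioo hθ).ne'
      have h := Real.hasDerivAt_tan hcos
      convert h using 1
      field_simp
  | const c hc => exact ⟨fun _ => 0, GFun.const 0 le_rfl, fun θ _ => by
      simpa using (hasDerivAt_const θ c)⟩
  | add hf hg ihf ihg =>
      obtain ⟨gf, hgf, hdf⟩ := ihf
      obtain ⟨gg, hgg, hdg⟩ := ihg
      exact ⟨fun θ => gf θ + gg θ, hgf.add hgg, fun θ hθ => by
        exact ((hdf θ hθ).add (hdg θ hθ)).congr_deriv (by ring)⟩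
  | @mul p q hp hq ihp ihq =>
      obtain ⟨gp, hgp, hdp⟩ := ihp
      obtain ⟨gq, hgq, hdq⟩ := ihq
      refine ⟨fun θ => gp θ * q θ + p θ * gq θ, (hgp.mul hq).add (hp.mul hgq),
        fun θ hθ => ?_⟩
      have := (hdp θ hθ).mul (hdq θ hθ)
      exact this.congr_deriv (by ring)



section Chain

variable {k a : ℝ}

lemma ay_mem (ha0 : 0 < a) {y : ℝ} (hy : y ∈ Ioo (-a⁻¹) a⁻¹) :
    -1 < a * y ∧ a * y < 1 := by
  constructor
  · have := (mul_lt_mul_iff_right₀ ha0).2 hy.1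
    rwa [mul_neg, mul_inv_cancel₀ ha0.ne'] at this
  · have := (mul_lt_mul_iff_right₀ ha0).2 hy.2
    rwa [mul_inv_cancel₀ ha0.ne'] at this

lemma chi_mem (ha0 : 0 < a) (ha1 : a < 1) {y : ℝ} (hy : y ∈ Ioo (-a⁻¹) a⁻¹) :
    Real.arcsin (a * y) ∈ Ioo (-(π / 2)) (π / 2) := by
  obtain ⟨h1, h2⟩ := ay_mem ha0 hy
  exact ⟨Real.neg_pi_div_two_lt_arcsin.2 h1, Real.arcsin_lt_pi_div_two.2 h2⟩

lemma chi_hasDerivAt (ha0 : 0 < a) (ha1 : a < 1) {y : ℝ} (hy : y ∈ Ioo (-a⁻¹) a⁻¹) :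
    HasDerivAt (fun y => Real.arcsin (a * y))
      (a * (Real.cos (Real.arcsin (a * y)))⁻¹) y := by
  obtain ⟨h1, h2⟩ := ay_mem ha0 hy
  have h := (Real.hasDerivAt_arcsin h1.ne' h2.ne).comp y
    ((hasDerivAt_id y).const_mul a |>.congr_deriv (by ring))
  · exact h.congr_deriv (by rw [Real.cos_arcsin]; ring)

lemma cos_chi_pos (ha0 : 0 < a) (ha1 : a < 1) {y : ℝ} (hy : y ∈ Ioo (-a⁻¹) a⁻¹) :
    0 < Real.cos (Real.arcsin (a * y)) :=
  Real.cos_pos_of_mem_Ioo (chi_mem ha0 ha1 hy)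

lemma chain (hk : 0 ≤ k) (ha0 : 0 < a) (ha1 : a < 1) {f} (hf : GFun k f) (l : ℕ) :
    ∃ g, GFun k g ∧ Set.EqOn (iteratedDeriv l (fun y => f (Real.arcsin (a * y))))
      (fun y => a ^ l * g (Real.arcsin (a * y))) (Ioo (-a⁻¹) a⁻¹) := by
  induction l with
  | zero => exact ⟨f, hf, fun y _ => by simp⟩
  | succ l ih =>
      obtain ⟨g, hg, heq⟩ := ih
      obtain ⟨h, hh, hdh⟩ := GFun.hasDeriv hk hg
      refine ⟨h, hh, fun y hy => ?_⟩
      have hopen : IsOpen (Ioo (-a⁻¹) a⁻¹) := isOpen_Ioo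
      have hev : iteratedDeriv l (fun y => f (Real.arcsin (a * y)))
          =ᶠ[nhds y] (fun y => a ^ l * g (Real.arcsin (a * y))) :=
        Filter.eventuallyEq_of_mem (hopen.mem_nhds hy) heq
      have hcos := (cos_chi_pos ha0 ha1 hy).ne'
      have hrep : HasDerivAt (fun y => a ^ l * g (Real.arcsin (a * y)))
          (a ^ (l + 1) * h (Real.arcsin (a * y))) y := by
        have hchain := ((hdh _ (chi_mem ha0 ha1 hy)).comp y
          (chi_hasDerivAt ha0 ha1 hy)).const_mul (a ^ l)
        exact hchain.congr_deriv (by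
          linear_combination (a ^ (l + 1) * h (Real.arcsin (a * y))) * mul_inv_cancel₀ hcos)
      rw [iteratedDeriv_succ, hev.deriv_eq, hrep.deriv]

lemma iter_hasDerivAt (hk : 0 ≤ k) (ha0 : 0 < a) (ha1 : a < 1) {f} (hf : GFun k f) (l : ℕ)
    {y : ℝ} (hy : y ∈ Ioo (-a⁻¹) a⁻¹) :
    HasDerivAt (iteratedDeriv l (fun y => f (Real.arcsin (a * y))))
      (iteratedDeriv (l + 1) (fun y => f (Real.arcsin (a * y))) y) y := by
  obtain ⟨g, hg, heq⟩ := chain hk ha0 ha1 hf l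
  obtain ⟨h, hh, hdh⟩ := GFun.hasDeriv hk hg
  have hopen : IsOpen (Ioo (-a⁻¹) a⁻¹) := isOpen_Ioo
  have hcos := (cos_chi_pos ha0 ha1 hy).ne'
  have hrep : HasDerivAt (fun y => a ^ l * g (Real.arcsin (a * y)))
      (a ^ (l + 1) * h (Real.arcsin (a * y))) y := by
    have hchain := ((hdh _ (chi_mem ha0 ha1 hy)).comp y
      (chi_hasDerivAt ha0 ha1 hy)).const_mul (a ^ l)
    exact hchain.congr_deriv (by
      linear_combination (a ^ (l + 1) * h (Real.arcsin (a * y))) * mul_inv_cancel₀ hcos)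
  have hev : (fun y => a ^ l * g (Real.arcsin (a * y)))
      =ᶠ[nhds y] iteratedDeriv l (fun y => f (Real.arcsin (a * y))) :=
    (Filter.eventuallyEq_of_mem (hopen.mem_nhds hy) heq).symm
  have hd : HasDerivAt (iteratedDeriv l (fun y => f (Real.arcsin (a * y))))
      (a ^ (l + 1) * h (Real.arcsin (a * y))) y := hrep.congr_of_eventuallyEq hev.symm
  have : iteratedDeriv (l + 1) (fun y => f (Real.arcsin (a * y))) y
      = a ^ (l + 1) * h (Real.arcsin (a * y)) := by
    rw [iteratedDeriv_succ, hd.deriv]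
  rwa [this]

lemma iter_nonneg (hk : 0 ≤ k) (ha0 : 0 < a) (ha1 : a < 1) {f} (hf : GFun k f) (l : ℕ)
    {y : ℝ} (h0 : 0 ≤ y) (h1 : y ≤ 1) :
    0 ≤ iteratedDeriv l (fun y => f (Real.arcsin (a * y))) y := by
  have h2 : (1 : ℝ) < a⁻¹ := (one_lt_inv₀ ha0).2 ha1
  have hy : y ∈ Ioo (-a⁻¹) a⁻¹ := ⟨by linarith, by linarith⟩
  obtain ⟨g, hg, heq⟩ := chain hk ha0 ha1 hf l
  rw [heq hy]
  have hθ0 : 0 ≤ Real.arcsin (a * y) := Real.arcsin_nonneg.2 (by positivity)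
  have hθ1 : Real.arcsin (a * y) < π / 2 :=
    Real.arcsin_lt_pi_div_two.2 (by nlinarith)
  exact mul_nonneg (by positivity) (hg.nonneg hk hθ0 hθ1)



noncomputable def psiP (l : ℕ) : Polynomial ℝ := (X ^ 2 - 1) ^ l

lemma iteratedDeriv_eval (p : Polynomial ℝ) (i : ℕ) :
    iteratedDeriv i (fun t : ℝ => p.eval t) = fun t => (derivative^[i] p).eval t := by
  induction i with
  | zero => simp
  | succ i ih =>
      rw [iteratedDeriv_succ, ih]
      funext t
      rw [Function.iterate_succ_apply']
      exact Polynomial.deriv (p := derivative^[i] p)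

lemma dvd_derivative_aux (n : ℕ) (q : Polynomial ℝ) :
    (X ^ 2 - 1 : Polynomial ℝ) ^ n ∣ derivative ((X ^ 2 - 1) ^ (n + 1) * q) := by
  rw [derivative_mul, derivative_pow, Nat.add_sub_cancel]
  exact dvd_add ⟨C ((n + 1 : ℕ) : ℝ) * derivative (X ^ 2 - 1) * q, by ring⟩
    ⟨(X ^ 2 - 1) * derivative q, by ring⟩

lemma psiP_dvd (l i : ℕ) (hi : i ≤ l) :
    (X ^ 2 - 1 : Polynomial ℝ) ^ (l - i) ∣ derivative^[i] (psiP l) := by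
  induction i with
  | zero => simp [psiP]
  | succ i ih =>
      obtain ⟨q, hq⟩ := ih (Nat.le_of_succ_le hi)
      have hli : l - i = (l - (i + 1)) + 1 := by omega
      rw [Function.iterate_succ_apply', hq, hli]
      exact dvd_derivative_aux _ q

lemma psiP_eval_zero (l i : ℕ) (hi : i < l) {y : ℝ} (hy : y = 1 ∨ y = -1) :
    (derivative^[i] (psiP l)).eval y = 0 := by
  obtain ⟨q, hq⟩ := psiP_dvd l i hi.le
  rw [hq, eval_mul, eval_pow, eval_sub, eval_pow, eval_one, eval_X]
  have : y ^ 2 - 1 = 0 := by rcases hy with h | h <;> rw [h] <;> ring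
  rw [this, zero_pow (by omega), zero_mul]

lemma rodrigues_ibp {f : ℝ → ℝ} (l : ℕ)
    (hd : ∀ j, ∀ y ∈ uIcc (-1 : ℝ) 1, HasDerivAt (iteratedDeriv j f) (iteratedDeriv (j + 1) f y) y) :
    ∫ y in (-1 : ℝ)..1, (derivative^[l] (psiP l)).eval y * f y
      = (-1 : ℝ) ^ l * ∫ y in (-1 : ℝ)..1, (psiP l).eval y * iteratedDeriv l f y := by
  have hcont : ∀ j, ContinuousOn (iteratedDeriv j f) (uIcc (-1 : ℝ) 1) :=
    fun j y hy => ((hd j y hy).continuousAt).continuousWithinAt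
  have hint : ∀ (p : Polynomial ℝ) (j : ℕ),
      IntervalIntegrable (fun y => p.eval y * iteratedDeriv j f y) MeasureTheory.volume (-1) 1 :=
    fun p j => ((Polynomial.continuous p).continuousOn.mul (hcont j)).intervalIntegrable
  have key : ∀ j, j ≤ l →
      (∫ y in (-1 : ℝ)..1, (derivative^[l] (psiP l)).eval y * f y)
        = (-1 : ℝ) ^ j * ∫ y in (-1 : ℝ)..1,
            (derivative^[l - j] (psiP l)).eval y * iteratedDeriv j f y := by
    intro j
    induction j with
    | zero => intro _; simp
    | succ j ih =>
        intro hj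
        rw [ih (Nat.le_of_succ_le hj)]
        have hlj : l - j = (l - (j + 1)) + 1 := by omega
        have hu : ∀ y ∈ uIcc (-1 : ℝ) 1,
            HasDerivAt (fun y => (derivative^[l - (j + 1)] (psiP l)).eval y)
              ((derivative^[l - j] (psiP l)).eval y) y := by
          intro y _
          rw [hlj, Function.iterate_succ_apply']
          exact Polynomial.hasDerivAt _ y
        have H : (∫ y in (-1:ℝ)..1, (fun y => (derivative^[l - (j + 1)] (psiP l)).eval y) y * iteratedDeriv (j+1) f y)
            = (derivative^[l - (j + 1)] (psiP l)).eval 1 * iteratedDeriv j f 1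
              - (derivative^[l - (j + 1)] (psiP l)).eval (-1) * iteratedDeriv j f (-1)
              - ∫ y in (-1:ℝ)..1, (fun y => (derivative^[l - j] (psiP l)).eval y) y * iteratedDeriv j f y :=
          integral_mul_deriv_eq_deriv_mul hu (fun y hy => hd j y hy)
            ((Polynomial.continuous _).continuousOn.intervalIntegrable)
            ((hcont (j+1)).intervalIntegrable)
        have h1 : (derivative^[l - (j + 1)] (psiP l)).eval 1 = 0 :=
          psiP_eval_zero l _ (by omega) (Or.inl rfl)
        have h2 : (derivative^[l - (j + 1)] (psiP l)).eval (-1) = 0 :=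
          psiP_eval_zero l _ (by omega) (Or.inr rfl)
        rw [h1, h2, zero_mul, zero_mul, sub_zero, zero_sub] at H
        simp only at H
        have : (∫ y in (-1 : ℝ)..1, (derivative^[l - j] (psiP l)).eval y * iteratedDeriv j f y)
            = -∫ y in (-1 : ℝ)..1,
                (derivative^[l - (j + 1)] (psiP l)).eval y * iteratedDeriv (j + 1) f y := by
          rw [H, neg_neg]
        rw [this, pow_succ]
        ring
  have := key l le_rfl
  simpa using this



section Descent

lemma hasDerivAt_one_sub_sq_pow (n : ℕ) (y : ℝ) :
    HasDerivAt (fun y : ℝ => (1 - y ^ 2) ^ (n + 1))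
      (-(2 * (n + 1 : ℝ)) * y * (1 - y ^ 2) ^ n) y := by
  have h1 : HasDerivAt (fun y : ℝ => 1 - y ^ 2) (-(2 * y)) y := by
    simpa using (hasDerivAt_pow 2 y).const_sub 1
  exact (h1.pow (n + 1)).congr_deriv (by push_cast [Nat.add_sub_cancel]; ring)

lemma cont_iter {f : ℝ → ℝ}
    (hd : ∀ j, ∀ y ∈ uIcc (-1 : ℝ) 1, HasDerivAt (iteratedDeriv j f) (iteratedDeriv (j + 1) f y) y)
    (j : ℕ) : ContinuousOn (iteratedDeriv j f) (uIcc (-1 : ℝ) 1) :=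
  fun y hy => ((hd j y hy).continuousAt).continuousWithinAt

lemma descent_step {f : ℝ → ℝ}
    (hd : ∀ j, ∀ y ∈ uIcc (-1 : ℝ) 1, HasDerivAt (iteratedDeriv j f) (iteratedDeriv (j + 1) f y) y)
    (j : ℕ)
    (hpos : ∀ y ∈ uIcc (-1 : ℝ) 1, 0 ≤ iteratedDeriv j f y) :
    (∫ y in (-1 : ℝ)..1, (1 - y ^ 2) ^ (j + 2) * iteratedDeriv (j + 2) f y)
      ≤ (4 * (j + 2) * (j + 1) : ℝ) * ∫ y in (-1 : ℝ)..1, (1 - y ^ 2) ^ j * iteratedDeriv j f y := by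
  have hcont := cont_iter hd
  have h1 : (∫ y in (-1 : ℝ)..1, (1 - y ^ 2) ^ (j + 2) * iteratedDeriv (j + 2) f y)
      = -∫ y in (-1 : ℝ)..1, (-(2 * (j + 2 : ℝ)) * y * (1 - y ^ 2) ^ (j + 1)) * iteratedDeriv (j + 1) f y := by
    have H := integral_mul_deriv_eq_deriv_mul
      (u := fun y : ℝ => (1 - y ^ 2) ^ (j + 2))
      (u' := fun y : ℝ => -(2 * (j + 2 : ℝ)) * y * (1 - y ^ 2) ^ (j + 1))
      (v := iteratedDeriv (j + 1) f) (v' := iteratedDeriv (j + 2) f)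
      (fun y _ => (hasDerivAt_one_sub_sq_pow (j + 1) y).congr_deriv (by push_cast; ring))
      (fun y hy => hd (j + 1) y hy)
      ((Continuous.continuousOn (by fun_prop)).intervalIntegrable)
      ((hcont (j + 2)).intervalIntegrable)
    simp only [one_pow, neg_one_sq] at H
    rw [H]
    norm_num
  have h2 : (∫ y in (-1 : ℝ)..1, (-(2 * (j + 2 : ℝ)) * y * (1 - y ^ 2) ^ (j + 1)) * iteratedDeriv (j + 1) f y)
      = -∫ y in (-1 : ℝ)..1,
          ((1 - y ^ 2) ^ j * (4 * (j + 2 : ℝ) * (j + 1) * y ^ 2 - 2 * (j + 2) * (1 - y ^ 2)))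
            * iteratedDeriv j f y := by
    have hw : ∀ y : ℝ, HasDerivAt (fun y : ℝ => -(2 * (j + 2 : ℝ)) * y * (1 - y ^ 2) ^ (j + 1))
        ((1 - y ^ 2) ^ j * (4 * (j + 2 : ℝ) * (j + 1) * y ^ 2 - 2 * (j + 2) * (1 - y ^ 2))) y := by
      intro y
      have hy : HasDerivAt (fun y : ℝ => -(2 * (j + 2 : ℝ)) * y) (-(2 * (j + 2 : ℝ))) y := by
        simpa using (hasDerivAt_id y).const_mul (-(2 * (j + 2 : ℝ)))
      have hp : HasDerivAt (fun y : ℝ => (1 - y ^ 2) ^ (j + 1))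
          (-(2 * (j + 1 : ℝ)) * y * (1 - y ^ 2) ^ j) y := by
        exact (hasDerivAt_one_sub_sq_pow j y).congr_deriv (by push_cast; ring)
      exact (hy.mul hp).congr_deriv (by ring)
    have H := integral_mul_deriv_eq_deriv_mul
      (u := fun y : ℝ => -(2 * (j + 2 : ℝ)) * y * (1 - y ^ 2) ^ (j + 1))
      (u' := fun y : ℝ => (1 - y ^ 2) ^ j * (4 * (j + 2 : ℝ) * (j + 1) * y ^ 2 - 2 * (j + 2) * (1 - y ^ 2)))
      (v := iteratedDeriv j f) (v' := iteratedDeriv (j + 1) f)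
      (fun y _ => hw y) (fun y hy => hd j y hy)
      ((Continuous.continuousOn (by fun_prop)).intervalIntegrable)
      ((hcont (j + 1)).intervalIntegrable)
    simp only [one_pow, neg_one_sq] at H
    rw [H]
    norm_num
  rw [h1, h2, neg_neg]
  have hmono : (∫ y in (-1 : ℝ)..1,
      ((1 - y ^ 2) ^ j * (4 * (j + 2 : ℝ) * (j + 1) * y ^ 2 - 2 * (j + 2) * (1 - y ^ 2)))
        * iteratedDeriv j f y)
      ≤ ∫ y in (-1 : ℝ)..1, (4 * (j + 2) * (j + 1) : ℝ) * ((1 - y ^ 2) ^ j * iteratedDeriv j f y) := by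
    apply intervalIntegral.integral_mono_on (by norm_num)
    · exact ((Continuous.continuousOn (by fun_prop)).mul (hcont j)).intervalIntegrable
    · exact (continuousOn_const.mul
        ((Continuous.continuousOn (by fun_prop)).mul (hcont j))).intervalIntegrable
    · intro y hy
      have hy' : y ∈ uIcc (-1 : ℝ) 1 := by
        rw [uIcc_of_le (by norm_num)]; exact hy
      have hsq : y ^ 2 ≤ 1 := by nlinarith [hy.1, hy.2]
      have h0 : (0 : ℝ) ≤ (1 - y ^ 2) ^ j := pow_nonneg (by nlinarith) j
      have hf0 := hpos y hy'
      have hj : (0 : ℝ) ≤ (j : ℝ) := Nat.cast_nonneg j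
      have hbr : (4 * (j + 2 : ℝ) * (j + 1) * y ^ 2 - 2 * (j + 2) * (1 - y ^ 2))
          ≤ 4 * (j + 2) * (j + 1) := by
        have h4 : 0 ≤ (4 * ((j : ℝ) + 2) * ((j : ℝ) + 1) + 2 * ((j : ℝ) + 2)) * (1 - y ^ 2) :=
          mul_nonneg (by positivity) (by linarith)
        nlinarith [h4]
      calc (1 - y ^ 2) ^ j * (4 * (j + 2 : ℝ) * (j + 1) * y ^ 2 - 2 * (j + 2) * (1 - y ^ 2))
            * iteratedDeriv j f y
          ≤ (1 - y ^ 2) ^ j * (4 * (j + 2 : ℝ) * (j + 1)) * iteratedDeriv j f y := by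
            apply mul_le_mul_of_nonneg_right _ hf0
            exact mul_le_mul_of_nonneg_left hbr h0
        _ = 4 * (j + 2 : ℝ) * (j + 1) * ((1 - y ^ 2) ^ j * iteratedDeriv j f y) := by ring
  calc _ ≤ _ := hmono
    _ = (4 * (j + 2) * (j + 1) : ℝ) * ∫ y in (-1 : ℝ)..1, (1 - y ^ 2) ^ j * iteratedDeriv j f y :=
      intervalIntegral.integral_const_mul _ _

end Descent



section P5
variable {k a : ℝ}


/-- convexity-type bound for sinh -/
lemma sinh_lam_mul {lam x : ℝ} (h0 : 0 ≤ lam) (h1 : lam ≤ 1) (hx : 0 ≤ x) :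
    Real.sinh (lam * x) ≤ lam * Real.sinh x := by
  have hder : ∀ t : ℝ, HasDerivAt (fun t => lam * Real.sinh t - Real.sinh (lam * t))
      (lam * Real.cosh t - Real.cosh (lam * t) * lam) t := by
    intro t
    have h2 : HasDerivAt (fun t : ℝ => Real.sinh (lam * t)) (Real.cosh (lam * t) * lam) t := by
      have := (Real.hasDerivAt_sinh (lam * t)).comp t
        (((hasDerivAt_id t).const_mul lam).congr_deriv (mul_one lam))
      exact this
    exact ((Real.hasDerivAt_sinh t).const_mul lam).sub h2
  have hmono : MonotoneOn (fun t => lam * Real.sinh t - Real.sinh (lam * t)) (Ici (0 : ℝ)) := by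
    apply monotoneOn_of_deriv_nonneg (convex_Ici 0)
      (Continuous.continuousOn (by fun_prop))
      (fun t _ => (hder t).differentiableAt.differentiableWithinAt)
    intro t ht
    rw [(hder t).deriv]
    rw [interior_Ici] at ht
    have hc : Real.cosh (lam * t) ≤ Real.cosh t := by
      rw [Real.cosh_le_cosh]
      rw [abs_of_nonneg (mul_nonneg h0 ht.le), abs_of_nonneg ht.le]
      nlinarith [(mem_Ioi.1 ht).le]
    nlinarith
  have h := hmono (self_mem_Ici) (mem_Ici.2 hx) hx
  simp only [mul_zero, Real.sinh_zero, sub_zero] at h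
  linarith

/-- The decomposition W = F - G -/
lemma W_decomp (hk : 0 < k) {x : ℝ} (hx1 : -1 < x) (hx2 : x < 1) :
    Real.sinh (k * Real.arccos x) / (Real.sin (Real.arccos x) * Real.sinh (π * k))
      = (2 * Real.cosh (k * (π / 2)))⁻¹ * (Real.cosh (k * Real.arcsin x) * (Real.cos (Real.arcsin x))⁻¹)
        - (2 * Real.sinh (k * (π / 2)))⁻¹ * (Real.sinh (k * Real.arcsin x) * (Real.cos (Real.arcsin x))⁻¹) := by
  have hcos : 0 < Real.cos (Real.arcsin x) := by
    rw [Real.cos_arcsin]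
    have : x ^ 2 < 1 := by nlinarith
    exact Real.sqrt_pos.2 (by nlinarith)
  have hsinh : 0 < Real.sinh (k * (π / 2)) := by
    apply Real.sinh_pos_iff.2
    have := Real.pi_pos
    positivity
  have hcosh : 0 < Real.cosh (k * (π / 2)) := Real.cosh_pos _
  have harc : Real.arccos x = π / 2 - Real.arcsin x := Real.arccos_eq_pi_div_two_sub_arcsin x
  have hsin : Real.sin (Real.arccos x) = Real.cos (Real.arcsin x) := by
    rw [harc, Real.sin_pi_div_two_sub]
  have hsinh2 : Real.sinh (π * k) = 2 * Real.sinh (k * (π / 2)) * Real.cosh (k * (π / 2)) := by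
    rw [show π * k = 2 * (k * (π / 2)) by ring]
    exact Real.sinh_two_mul _
  have hexp : Real.sinh (k * Real.arccos x)
      = Real.sinh (k * (π / 2)) * Real.cosh (k * Real.arcsin x)
        - Real.cosh (k * (π / 2)) * Real.sinh (k * Real.arcsin x) := by
    rw [harc, show k * (π / 2 - Real.arcsin x) = k * (π / 2) - k * Real.arcsin x by ring,
      Real.sinh_sub]
  rw [hsin, hsinh2, hexp]
  field_simp

/-- sqrt algebra -/
lemma sqrt_algebra {m : ℝ} (hm : 0 < m) :
    Real.sqrt (1 - ((m + 1)⁻¹) ^ 2) = Real.sqrt (m * (m + 2)) * (m + 1)⁻¹ := by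
  have hm1 : (0:ℝ) < m + 1 := by linarith
  have h : 1 - ((m + 1)⁻¹) ^ 2 = (m * (m + 2)) * ((m + 1)⁻¹) ^ 2 := by
    field_simp
    ring
  rw [h, Real.sqrt_mul (by positivity), Real.sqrt_sq (by positivity)]

end P5






lemma iter_even_fun {f : ℝ → ℝ} (hf : ∀ y, f (-y) = f y) (j : ℕ) (y : ℝ) :
    iteratedDeriv j f y = (-1 : ℝ) ^ j * iteratedDeriv j f (-y) := by
  have h := iteratedDeriv_comp_neg j f y
  rw [show (fun x => f (-x)) = f from funext hf] at h
  simpa [smul_eq_mul] using h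

lemma iter_odd_fun {f : ℝ → ℝ} (hf : ∀ y, f (-y) = -f y) (j : ℕ) (y : ℝ) :
    iteratedDeriv j f y = -((-1 : ℝ) ^ j * iteratedDeriv j f (-y)) := by
  have h := iteratedDeriv_comp_neg j f y
  rw [show (fun x => f (-x)) = fun x => -f x from funext hf] at h
  rw [iteratedDeriv_fun_neg] at h
  simp only [smul_eq_mul] at h
  linarith [h]

lemma integral_odd_zero {f : ℝ → ℝ} (hf : ∀ y, f (-y) = -f y) :
    ∫ y in (-1 : ℝ)..1, f y = 0 := by
  have h := intervalIntegral.integral_comp_neg (a := (-1 : ℝ)) (b := 1) f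
  simp only [neg_neg] at h
  have h2 : (∫ y in (-1 : ℝ)..1, f (-y)) = -∫ y in (-1 : ℝ)..1, f y := by
    rw [show (fun y : ℝ => f (-y)) = fun y => -f y from funext hf]
    exact intervalIntegral.integral_neg
  rw [h2] at h
  linarith

lemma legendreP_eq (l : ℕ) (y : ℝ) :
    legendreP l y = (1 / (2 ^ l * (Nat.factorial l : ℝ))) * (derivative^[l] (psiP l)).eval y := by
  unfold legendreP
  rw [show (fun t : ℝ => (t ^ 2 - 1) ^ l) = fun t => (psiP l).eval t by
    funext t; simp [psiP], iteratedDeriv_eval]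

lemma legendreP_neg (l : ℕ) (y : ℝ) : legendreP l (-y) = (-1 : ℝ) ^ l * legendreP l y := by
  unfold legendreP
  have heven : ∀ t : ℝ, (fun t : ℝ => (t ^ 2 - 1) ^ l) (-t) = (fun t : ℝ => (t ^ 2 - 1) ^ l) t := by
    intro t; simp
  rw [iter_even_fun heven l (-y), neg_neg]
  ring

section Chains


lemma fact_arith (j : ℕ) :
    ((2 : ℝ) ^ (j + 2) * (Nat.factorial (j + 2) : ℝ))⁻¹ * (4 * (j + 2) * (j + 1) : ℝ)
      = ((2 : ℝ) ^ j * (Nat.factorial j : ℝ))⁻¹ := by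
  have h1 : (Nat.factorial (j + 2) : ℝ) = (j + 2) * (j + 1) * (Nat.factorial j : ℝ) := by
    rw [Nat.factorial_succ, Nat.factorial_succ]
    push_cast
    ring
  have h2 : (Nat.factorial j : ℝ) ≠ 0 := Nat.cast_ne_zero.2 (Nat.factorial_ne_zero j)
  have h3 : ((j : ℝ) + 2) ≠ 0 := by positivity
  have h4 : ((j : ℝ) + 1) ≠ 0 := by positivity
  rw [h1]
  field_simp
  ring

lemma chain_step {f : ℝ → ℝ}
    (hd : ∀ j, ∀ y ∈ uIcc (-1 : ℝ) 1, HasDerivAt (iteratedDeriv j f) (iteratedDeriv (j + 1) f y) y)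
    (j : ℕ)
    (hpos : ∀ y ∈ uIcc (-1 : ℝ) 1, 0 ≤ iteratedDeriv j f y) :
    ((2 : ℝ) ^ (j + 2) * (Nat.factorial (j + 2) : ℝ))⁻¹
        * ∫ y in (-1 : ℝ)..1, (1 - y ^ 2) ^ (j + 2) * iteratedDeriv (j + 2) f y
      ≤ ((2 : ℝ) ^ j * (Nat.factorial j : ℝ))⁻¹
        * ∫ y in (-1 : ℝ)..1, (1 - y ^ 2) ^ j * iteratedDeriv j f y := by
  have h := descent_step hd j hpos
  have hc : (0 : ℝ) ≤ ((2 : ℝ) ^ (j + 2) * (Nat.factorial (j + 2) : ℝ))⁻¹ := by positivity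
  calc ((2 : ℝ) ^ (j + 2) * (Nat.factorial (j + 2) : ℝ))⁻¹
      * ∫ y in (-1 : ℝ)..1, (1 - y ^ 2) ^ (j + 2) * iteratedDeriv (j + 2) f y
      ≤ ((2 : ℝ) ^ (j + 2) * (Nat.factorial (j + 2) : ℝ))⁻¹
        * ((4 * (j + 2) * (j + 1) : ℝ) * ∫ y in (-1 : ℝ)..1, (1 - y ^ 2) ^ j * iteratedDeriv j f y) :=
        mul_le_mul_of_nonneg_left h hc
    _ = (((2 : ℝ) ^ (j + 2) * (Nat.factorial (j + 2) : ℝ))⁻¹ * (4 * (j + 2) * (j + 1) : ℝ))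
        * ∫ y in (-1 : ℝ)..1, (1 - y ^ 2) ^ j * iteratedDeriv j f y := by ring
    _ = _ := by rw [fact_arith j]

lemma chain_even {f : ℝ → ℝ}
    (hd : ∀ j, ∀ y ∈ uIcc (-1 : ℝ) 1, HasDerivAt (iteratedDeriv j f) (iteratedDeriv (j + 1) f y) y)
    (hpos : ∀ j, Even j → ∀ y ∈ uIcc (-1 : ℝ) 1, 0 ≤ iteratedDeriv j f y)
    (l : ℕ) (hl : Even l) :
    ((2 : ℝ) ^ l * (Nat.factorial l : ℝ))⁻¹
        * ∫ y in (-1 : ℝ)..1, (1 - y ^ 2) ^ l * iteratedDeriv l f y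
      ≤ ∫ y in (-1 : ℝ)..1, f y := by
  obtain ⟨n, rfl⟩ : ∃ n, l = 2 * n := by
    obtain ⟨n, hn⟩ := hl; exact ⟨n, by omega⟩
  induction n with
  | zero => simp
  | succ n ih =>
      have h2 : 2 * (n + 1) = 2 * n + 2 := by ring
      rw [h2]
      calc _ ≤ ((2 : ℝ) ^ (2 * n) * (Nat.factorial (2 * n) : ℝ))⁻¹
          * ∫ y in (-1 : ℝ)..1, (1 - y ^ 2) ^ (2 * n) * iteratedDeriv (2 * n) f y :=
            chain_step hd (2 * n) (hpos (2 * n) (even_two_mul n))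
        _ ≤ _ := ih (even_two_mul n)

lemma chain_odd {f : ℝ → ℝ}
    (hd : ∀ j, ∀ y ∈ uIcc (-1 : ℝ) 1, HasDerivAt (iteratedDeriv j f) (iteratedDeriv (j + 1) f y) y)
    (hpos : ∀ j, Odd j → ∀ y ∈ uIcc (-1 : ℝ) 1, 0 ≤ iteratedDeriv j f y)
    (l : ℕ) (hl : Odd l) :
    ((2 : ℝ) ^ l * (Nat.factorial l : ℝ))⁻¹
        * ∫ y in (-1 : ℝ)..1, (1 - y ^ 2) ^ l * iteratedDeriv l f y
      ≤ 2⁻¹ * ∫ y in (-1 : ℝ)..1, (1 - y ^ 2) ^ 1 * iteratedDeriv 1 f y := by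
  obtain ⟨n, rfl⟩ : ∃ n, l = 2 * n + 1 := hl
  induction n with
  | zero => simp [Nat.factorial]
  | succ n ih =>
      have h2 : 2 * (n + 1) + 1 = (2 * n + 1) + 2 := by ring
      rw [h2]
      calc _ ≤ ((2 : ℝ) ^ (2 * n + 1) * (Nat.factorial (2 * n + 1) : ℝ))⁻¹
          * ∫ y in (-1 : ℝ)..1, (1 - y ^ 2) ^ (2 * n + 1) * iteratedDeriv (2 * n + 1) f y :=
            chain_step hd (2 * n + 1) (hpos (2 * n + 1) ⟨n, by omega⟩)
        _ ≤ _ := ih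

lemma base_odd {f : ℝ → ℝ}
    (hd : ∀ j, ∀ y ∈ uIcc (-1 : ℝ) 1, HasDerivAt (iteratedDeriv j f) (iteratedDeriv (j + 1) f y) y) :
    (∫ y in (-1 : ℝ)..1, (1 - y ^ 2) ^ 1 * iteratedDeriv 1 f y)
      = 2 * ∫ y in (-1 : ℝ)..1, y * f y := by
  have hcont : ∀ j, ContinuousOn (iteratedDeriv j f) (uIcc (-1 : ℝ) 1) :=
    fun j y hy => ((hd j y hy).continuousAt).continuousWithinAt
  have H := integral_mul_deriv_eq_deriv_mul
    (u := fun y : ℝ => 1 - y ^ 2) (u' := fun y : ℝ => -(2 * y))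
    (v := iteratedDeriv 0 f) (v' := iteratedDeriv 1 f)
    (fun y _ => by simpa using (hasDerivAt_pow 2 y).const_sub 1)
    (fun y hy => hd 0 y hy)
    ((Continuous.continuousOn (by fun_prop)).intervalIntegrable)
    ((hcont 1).intervalIntegrable)
  simp only [iteratedDeriv_zero] at H
  have h1 : (∫ y in (-1 : ℝ)..1, (1 - y ^ 2) ^ 1 * iteratedDeriv 1 f y)
      = ∫ y in (-1 : ℝ)..1, (1 - y ^ 2) * iteratedDeriv 1 f y := by
    simp [pow_one]
  rw [h1, H]
  norm_num
  simp only [mul_assoc]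
  rw [intervalIntegral.integral_const_mul]

end Chains

lemma Sl_neg_eq (m : ℝ) (N l : ℕ) (k : ℝ) : Sl m N l (-k) = Sl m N l k := by
  unfold Sl
  congr 1
  apply intervalIntegral.integral_congr
  intro y _
  simp only [neg_mul, Real.sinh_neg, mul_neg, neg_div_neg_eq]

lemma Sl_bounds_pos (m : ℝ) (hm : 0 < m) (N : ℕ) (hN : 2 ≤ N) (k : ℝ) (hk : 0 < k) (l : ℕ) :
    (Even l →
      0 ≤ Sl m N l k ∧
      Sl m N l k ≤ 2 * Real.pi ^ 2 * ((N : ℝ) - 1) * (m + 1) * Real.arcsin (1 / (m + 1))) ∧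
    (Odd l →
      -(4 * Real.pi * ((N : ℝ) - 1) * (m + 1) *
          (1 - Real.sqrt (m * (m + 2)) * Real.arcsin (1 / (m + 1)))) ≤ Sl m N l k ∧
      Sl m N l k ≤ 0) := by
  have hπ := Real.pi_pos
  have hk0 : 0 ≤ k := hk.le
  have hm1 : (0 : ℝ) < m + 1 := by linarith
  rw [show (1 : ℝ) / (m + 1) = (m + 1)⁻¹ from one_div _]
  set a : ℝ := (m + 1)⁻¹ with ha_def
  have ha0 : 0 < a := by positivity
  have ha1 : a < 1 := by
    rw [ha_def]
    rw [inv_lt_one_iff₀]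
    right; linarith
  have hainv : a⁻¹ = m + 1 := by rw [ha_def, inv_inv]
  have hsub : ∀ y ∈ uIcc (-1 : ℝ) 1, y ∈ Ioo (-a⁻¹) a⁻¹ := by
    intro y hy
    rw [uIcc_of_le (by norm_num)] at hy
    rw [hainv]
    exact ⟨by linarith [hy.1], by linarith [hy.2]⟩
  -- the two basic cone functions
  have hsinh_pos : 0 < Real.sinh (k * (π / 2)) := Real.sinh_pos_iff.2 (by positivity)
  have hcosh_pos : 0 < Real.cosh (k * (π / 2)) := Real.cosh_pos _
  set cF : ℝ := (2 * Real.cosh (k * (π / 2)))⁻¹ with hcF_def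
  set cG : ℝ := (2 * Real.sinh (k * (π / 2)))⁻¹ with hcG_def
  have hcF0 : 0 ≤ cF := by positivity
  have hcG0 : 0 ≤ cG := by positivity
  set fF : ℝ → ℝ := fun θ => cF * (Real.cosh (k * θ) * (Real.cos θ)⁻¹) with hfF_def
  set fG : ℝ → ℝ := fun θ => cG * (Real.sinh (k * θ) * (Real.cos θ)⁻¹) with hfG_def
  have hGF : GFun k fF := (GFun.const cF hcF0).mul (GFun.cosh.mul GFun.sec)
  have hGG : GFun k fG := (GFun.const cG hcG0).mul (GFun.sinh.mul GFun.sec)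
  set F : ℝ → ℝ := fun y => fF (Real.arcsin (a * y)) with hF_def
  set G : ℝ → ℝ := fun y => fG (Real.arcsin (a * y)) with hG_def
  -- derivative packs
  have hdF : ∀ j, ∀ y ∈ uIcc (-1 : ℝ) 1,
      HasDerivAt (iteratedDeriv j F) (iteratedDeriv (j + 1) F y) y :=
    fun j y hy => iter_hasDerivAt hk0 ha0 ha1 hGF j (hsub y hy)
  have hdG : ∀ j, ∀ y ∈ uIcc (-1 : ℝ) 1,
      HasDerivAt (iteratedDeriv j G) (iteratedDeriv (j + 1) G y) y :=
    fun j y hy => iter_hasDerivAt hk0 ha0 ha1 hGG j (hsub y hy)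
  have hcontF := cont_iter hdF
  have hcontG := cont_iter hdG
  have hFcont : ContinuousOn F (uIcc (-1 : ℝ) 1) := by
    have := hcontF 0
    rwa [iteratedDeriv_zero] at this
  have hGcont : ContinuousOn G (uIcc (-1 : ℝ) 1) := by
    have := hcontG 0
    rwa [iteratedDeriv_zero] at this
  -- parity of F and G
  have hFeven : ∀ y, F (-y) = F y := by
    intro y
    show fF (Real.arcsin (a * -y)) = fF (Real.arcsin (a * y))
    rw [mul_neg, Real.arcsin_neg, hfF_def]
    simp [mul_neg, Real.cosh_neg, Real.cos_neg]
  have hGodd : ∀ y, G (-y) = -G y := by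
    intro y
    show fG (Real.arcsin (a * -y)) = -fG (Real.arcsin (a * y))
    rw [mul_neg, Real.arcsin_neg, hfG_def]
    simp [mul_neg, Real.sinh_neg, Real.cos_neg]
  -- derivative positivity
  have hposF : ∀ j, Even j → ∀ y ∈ uIcc (-1 : ℝ) 1, 0 ≤ iteratedDeriv j F y := by
    intro j hj y hy
    rw [uIcc_of_le (by norm_num)] at hy
    rcases le_or_gt 0 y with h0 | h0
    · exact iter_nonneg hk0 ha0 ha1 hGF j h0 hy.2
    · rw [iter_even_fun hFeven j y, hj.neg_one_pow, one_mul]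
      exact iter_nonneg hk0 ha0 ha1 hGF j (by linarith) (by linarith [hy.1])
  have hposG : ∀ j, Odd j → ∀ y ∈ uIcc (-1 : ℝ) 1, 0 ≤ iteratedDeriv j G y := by
    intro j hj y hy
    rw [uIcc_of_le (by norm_num)] at hy
    rcases le_or_gt 0 y with h0 | h0
    · exact iter_nonneg hk0 ha0 ha1 hGG j h0 hy.2
    · rw [iter_odd_fun hGodd j y, hj.neg_one_pow, neg_one_mul, neg_neg]
      exact iter_nonneg hk0 ha0 ha1 hGG j (by linarith) (by linarith [hy.1])
  -- continuity of legendreP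
  have hPcont : Continuous (legendreP l) := by
    rw [show legendreP l = fun y => (1 / (2 ^ l * (Nat.factorial l : ℝ)))
        * (derivative^[l] (psiP l)).eval y from funext (legendreP_eq l)]
    exact continuous_const.mul (Polynomial.continuous _)
  -- main decomposition of Sl
  set IF : ℝ := ∫ y in (-1 : ℝ)..1, legendreP l y * F y with hIF_def
  set IG : ℝ := ∫ y in (-1 : ℝ)..1, legendreP l y * G y with hIG_def
  set C : ℝ := 2 * Real.pi ^ 2 * ((N : ℝ) - 1) with hC_def
  have hN2 : (2 : ℝ) ≤ (N : ℝ) := by exact_mod_cast hN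
  have hC0 : 0 ≤ C := by
    rw [hC_def]
    have : (0 : ℝ) ≤ (N : ℝ) - 1 := by linarith
    positivity
  have hSl : Sl m N l k = C * (IF - IG) := by
    unfold Sl
    rw [hC_def, hIF_def, hIG_def]
    congr 1
    rw [← intervalIntegral.integral_sub (f := fun y => legendreP l y * F y)
      (g := fun y => legendreP l y * G y) ((hPcont.continuousOn.mul hFcont).intervalIntegrable)
      ((hPcont.continuousOn.mul hGcont).intervalIntegrable)]
    apply intervalIntegral.integral_congr
    intro y hy
    have hmem := ay_mem ha0 (hsub y hy)
    have hdiv : y / (m + 1) = a * y := by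
      rw [ha_def, div_eq_mul_inv, mul_comm]
    simp only [hdiv]
    rw [mul_div_assoc, W_decomp hk hmem.1 hmem.2]
    show legendreP l y * (F y - G y) = _
    ring
  -- Rodrigues + IBP identity
  have hIBP : ∀ (f : ℝ → ℝ),
      (∀ j, ∀ y ∈ uIcc (-1 : ℝ) 1, HasDerivAt (iteratedDeriv j f) (iteratedDeriv (j + 1) f y) y) →
      (∫ y in (-1 : ℝ)..1, legendreP l y * f y)
        = ((2 : ℝ) ^ l * (Nat.factorial l : ℝ))⁻¹
          * ∫ y in (-1 : ℝ)..1, (1 - y ^ 2) ^ l * iteratedDeriv l f y := by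
    intro f hd
    have h1 : (∫ y in (-1 : ℝ)..1, legendreP l y * f y)
        = (1 / ((2 : ℝ) ^ l * (Nat.factorial l : ℝ)))
          * ∫ y in (-1 : ℝ)..1, (derivative^[l] (psiP l)).eval y * f y := by
      rw [← intervalIntegral.integral_const_mul]
      apply intervalIntegral.integral_congr
      intro y _
      show legendreP l y * f y
          = 1 / (2 ^ l * (Nat.factorial l : ℝ)) * ((derivative^[l] (psiP l)).eval y * f y)
      rw [legendreP_eq]
      ring
    rw [h1, rodrigues_ibp l hd, one_div]
    congr 1
    rw [← intervalIntegral.integral_const_mul]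
    apply intervalIntegral.integral_congr
    intro y _
    show (-1 : ℝ) ^ l * ((psiP l).eval y * iteratedDeriv l f y)
        = (1 - y ^ 2) ^ l * iteratedDeriv l f y
    have hev : (psiP l).eval y = (y ^ 2 - 1) ^ l := by simp [psiP]
    rw [hev]
    have h9 : ((-1 : ℝ)) ^ l * (y ^ 2 - 1) ^ l = (1 - y ^ 2) ^ l := by
      rw [← mul_pow]
      ring_nf
    rw [← mul_assoc, h9]
  -- nonnegativity of the E-integrals
  have hE_nonneg : ∀ (f : ℝ → ℝ) (j : ℕ), (∀ y ∈ uIcc (-1 : ℝ) 1, 0 ≤ iteratedDeriv j f y) →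
      0 ≤ ∫ y in (-1 : ℝ)..1, (1 - y ^ 2) ^ j * iteratedDeriv j f y := by
    intro f j hpos
    apply intervalIntegral.integral_nonneg (by norm_num)
    intro y hy
    have hy' : y ∈ uIcc (-1 : ℝ) 1 := by rw [uIcc_of_le (by norm_num)]; exact hy
    exact mul_nonneg (pow_nonneg (by nlinarith [hy.1, hy.2]) j) (hpos y hy')
  constructor
  · -- Even case
    intro hl
    have hIG0 : IG = 0 := by
      rw [hIG_def]
      apply integral_odd_zero
      intro y
      rw [legendreP_neg, hGodd, hl.neg_one_pow, one_mul]
      ring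
    have hIFeq := hIBP F hdF
    have hEFpos : 0 ≤ ∫ y in (-1 : ℝ)..1, (1 - y ^ 2) ^ l * iteratedDeriv l F y :=
      hE_nonneg F l (hposF l hl)
    have hIF0 : 0 ≤ IF := by
      rw [hIF_def, hIFeq]
      positivity
    -- upper bound
    have hchain := chain_even hdF hposF l hl
    -- bound on ∫ F
    have hFptwise : ∀ y ∈ Icc (-1 : ℝ) 1,
        F y ≤ (2 * a)⁻¹ * (a * (Real.cos (Real.arcsin (a * y)))⁻¹) := by
      intro y hy
      have hy' : y ∈ uIcc (-1 : ℝ) 1 := by rw [uIcc_of_le (by norm_num)]; exact hy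
      have hs := Real.arcsin_mem_Icc (a * y)
      have hcosh_le : Real.cosh (k * Real.arcsin (a * y)) ≤ Real.cosh (k * (π / 2)) := by
        rw [Real.cosh_le_cosh, abs_mul, abs_mul, abs_of_nonneg hk0,
          abs_of_nonneg (by positivity : (0:ℝ) ≤ π / 2)]
        apply mul_le_mul_of_nonneg_left _ hk0
        exact abs_le.2 ⟨hs.1, hs.2⟩
      have hcosinv : 0 ≤ (Real.cos (Real.arcsin (a * y)))⁻¹ :=
        inv_nonneg.2 (Real.cos_arcsin_nonneg _)
      show fF (Real.arcsin (a * y)) ≤ _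
      rw [hfF_def]
      have hcospos := cos_chi_pos ha0 ha1 (hsub y hy')
      have hrhs : (2 * a)⁻¹ * (a * (Real.cos (Real.arcsin (a * y)))⁻¹)
          = 2⁻¹ * (Real.cos (Real.arcsin (a * y)))⁻¹ := by
        rw [mul_inv, mul_assoc, inv_mul_cancel_left₀ ha0.ne']
      rw [hrhs]
      calc cF * (Real.cosh (k * Real.arcsin (a * y)) * (Real.cos (Real.arcsin (a * y)))⁻¹)
          ≤ cF * (Real.cosh (k * (π / 2)) * (Real.cos (Real.arcsin (a * y)))⁻¹) := by
            apply mul_le_mul_of_nonneg_left _ hcF0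
            exact mul_le_mul_of_nonneg_right hcosh_le hcosinv
        _ = 2⁻¹ * (Real.cos (Real.arcsin (a * y)))⁻¹ := by
            rw [hcF_def, mul_inv, mul_assoc, inv_mul_cancel_left₀ hcosh_pos.ne']
    have hphi_cont : ContinuousOn
        (fun y => (2 * a)⁻¹ * (a * (Real.cos (Real.arcsin (a * y)))⁻¹)) (uIcc (-1 : ℝ) 1) := by
      apply continuousOn_const.mul
      apply continuousOn_const.mul
      apply ContinuousOn.inv₀
      · exact (Real.continuous_cos.comp
          (Real.continuous_arcsin.comp (continuous_const.mul continuous_id))).continuousOn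
      · exact fun y hy => (cos_chi_pos ha0 ha1 (hsub y hy)).ne'
    have hFint : (∫ y in (-1 : ℝ)..1, F y)
        ≤ ∫ y in (-1 : ℝ)..1, (2 * a)⁻¹ * (a * (Real.cos (Real.arcsin (a * y)))⁻¹) := by
      apply intervalIntegral.integral_mono_on (by norm_num)
        (hFcont.intervalIntegrable) (hphi_cont.intervalIntegrable) hFptwise
    have hFTC := intervalIntegral.integral_eq_sub_of_hasDerivAt
      (a := (-1 : ℝ)) (b := 1)
      (f := fun y => (2 * a)⁻¹ * Real.arcsin (a * y))
      (f' := fun y => (2 * a)⁻¹ * (a * (Real.cos (Real.arcsin (a * y)))⁻¹))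
      (fun y hy => (chi_hasDerivAt ha0 ha1 (hsub y hy)).const_mul (2 * a)⁻¹)
      (hphi_cont.intervalIntegrable)
    have hFbound : (∫ y in (-1 : ℝ)..1, F y) ≤ (m + 1) * Real.arcsin a := by
      refine hFint.trans (le_of_eq ?_)
      rw [hFTC]
      rw [mul_one, mul_neg_one, Real.arcsin_neg]
      have : (2 * a)⁻¹ * Real.arcsin a - (2 * a)⁻¹ * -Real.arcsin a
          = a⁻¹ * Real.arcsin a := by
        field_simp
        ring
      rw [this, hainv]
    constructor
    · rw [hSl, hIG0, sub_zero]
      exact mul_nonneg hC0 hIF0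
    · rw [hSl, hIG0, sub_zero]
      have hIFle : IF ≤ (m + 1) * Real.arcsin a := by
        rw [hIF_def, hIFeq]
        exact hchain.trans hFbound
      calc C * IF ≤ C * ((m + 1) * Real.arcsin a) := mul_le_mul_of_nonneg_left hIFle hC0
        _ = C * (m + 1) * Real.arcsin a := by ring
  · -- Odd case
    intro hl
    have hIF0 : IF = 0 := by
      rw [hIF_def]
      apply integral_odd_zero
      intro y
      rw [legendreP_neg, hFeven, hl.neg_one_pow]
      ring
    have hIGeq := hIBP G hdG
    have hEGpos : 0 ≤ ∫ y in (-1 : ℝ)..1, (1 - y ^ 2) ^ l * iteratedDeriv l G y :=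
      hE_nonneg G l (hposG l hl)
    have hIG0 : 0 ≤ IG := by
      rw [hIG_def, hIGeq]
      positivity
    have hchain := chain_odd hdG hposG l hl
    have hbase := base_odd hdG
    -- pointwise bound for y * G y
    have hGpt0 : ∀ y, 0 ≤ y → y ≤ 1 →
        y * G y ≤ π⁻¹ * (y * Real.arcsin (a * y) * (Real.cos (Real.arcsin (a * y)))⁻¹) := by
      intro y h0 h1
      have hay0 : 0 ≤ a * y := by positivity
      have hay1 : a * y ≤ 1 := by nlinarith
      have hs0 : 0 ≤ Real.arcsin (a * y) := Real.arcsin_nonneg.2 hay0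
      have hs2 : Real.arcsin (a * y) ≤ π / 2 := Real.arcsin_le_pi_div_two _
      set s := Real.arcsin (a * y) with hs_def
      have hlam0 : 0 ≤ s / (π / 2) := by positivity
      have hlam1 : s / (π / 2) ≤ 1 := by
        rw [div_le_one (by positivity)]
        exact hs2
      have hks : k * s = (s / (π / 2)) * (k * (π / 2)) := by
        field_simp
      have hsinh_le : Real.sinh (k * s) ≤ (s / (π / 2)) * Real.sinh (k * (π / 2)) := by
        rw [hks]
        exact sinh_lam_mul hlam0 hlam1 (by positivity)
      have hcosinv : 0 ≤ (Real.cos s)⁻¹ := inv_nonneg.2 (hs_def ▸ Real.cos_arcsin_nonneg _)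
      show y * fG s ≤ π⁻¹ * (y * s * (Real.cos s)⁻¹)
      rw [hfG_def]
      calc y * (cG * (Real.sinh (k * s) * (Real.cos s)⁻¹))
          ≤ y * (cG * (((s / (π / 2)) * Real.sinh (k * (π / 2))) * (Real.cos s)⁻¹)) := by
            apply mul_le_mul_of_nonneg_left _ h0
            apply mul_le_mul_of_nonneg_left _ hcG0
            exact mul_le_mul_of_nonneg_right hsinh_le hcosinv
        _ = (s / (π / 2)) * (Real.sinh (k * (π / 2)) * (2 * Real.sinh (k * (π / 2)))⁻¹)
              * (y * (Real.cos s)⁻¹) := by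
            rw [hcG_def]; ring
        _ = π⁻¹ * (y * s * (Real.cos s)⁻¹) := by
            rw [mul_inv, ← mul_assoc (Real.sinh (k * (π / 2))),
              mul_comm (Real.sinh (k * (π / 2))) (2 : ℝ)⁻¹,
              mul_assoc (2 : ℝ)⁻¹, mul_inv_cancel₀ hsinh_pos.ne', mul_one]
            field_simp
    have hGpt : ∀ y ∈ Icc (-1 : ℝ) 1,
        y * G y ≤ π⁻¹ * (y * Real.arcsin (a * y) * (Real.cos (Real.arcsin (a * y)))⁻¹) := by
      intro y hy
      rcases le_or_gt 0 y with h0 | h0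
      · exact hGpt0 y h0 hy.2
      · have h1 : (0 : ℝ) ≤ -y := by linarith
        have h2 : -y ≤ 1 := by linarith [hy.1]
        have := hGpt0 (-y) h1 h2
        rw [hGodd] at this
        have hL : -y * -G y = y * G y := by ring
        rw [hL] at this
        refine this.trans (le_of_eq ?_)
        rw [mul_neg, Real.arcsin_neg, Real.cos_neg]
        ring
    -- FTC for the Ψ function
    have hΨd : ∀ y ∈ uIcc (-1 : ℝ) 1,
        HasDerivAt (fun y => π⁻¹ * (a⁻¹ * a⁻¹)
            * (a * y - Real.cos (Real.arcsin (a * y)) * Real.arcsin (a * y)))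
          (π⁻¹ * (y * Real.arcsin (a * y) * (Real.cos (Real.arcsin (a * y)))⁻¹)) y := by
      intro y hy
      have hχ := chi_hasDerivAt ha0 ha1 (hsub y hy)
      have hcos := cos_chi_pos ha0 ha1 (hsub y hy)
      have hmem := ay_mem ha0 (hsub y hy)
      have h1 : HasDerivAt (fun y : ℝ => a * y) a y := by
        simpa using (hasDerivAt_id y).const_mul a
      have h2 : HasDerivAt (fun y => Real.cos (Real.arcsin (a * y)))
          (-Real.sin (Real.arcsin (a * y)) * (a * (Real.cos (Real.arcsin (a * y)))⁻¹)) y :=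
        (Real.hasDerivAt_cos _).comp y hχ
      have h3 := h2.mul hχ
      have h4 := (h1.sub h3).const_mul (π⁻¹ * (a⁻¹ * a⁻¹))
      have hsin : Real.sin (Real.arcsin (a * y)) = a * y :=
        Real.sin_arcsin hmem.1.le hmem.2.le
      refine h4.congr_deriv ?_
      rw [hsin]
      linear_combination (-(π⁻¹ * a⁻¹ * a⁻¹ * a)) * mul_inv_cancel₀ hcos.ne'
        + (π⁻¹ * y * Real.arcsin (a * y) * (Real.cos (Real.arcsin (a * y)))⁻¹ * (a * a⁻¹ + 1))
          * mul_inv_cancel₀ ha0.ne'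
    have hΨcont : ContinuousOn
        (fun y => π⁻¹ * (y * Real.arcsin (a * y) * (Real.cos (Real.arcsin (a * y)))⁻¹))
        (uIcc (-1 : ℝ) 1) := by
      apply continuousOn_const.mul
      apply ContinuousOn.mul
      · exact (continuous_id.mul
          (Real.continuous_arcsin.comp (continuous_const.mul continuous_id))).continuousOn
      · apply ContinuousOn.inv₀
        · exact (Real.continuous_cos.comp
            (Real.continuous_arcsin.comp (continuous_const.mul continuous_id))).continuousOn
        · exact fun y hy => (cos_chi_pos ha0 ha1 (hsub y hy)).ne'
    have hGcont' : ContinuousOn (fun y => y * G y) (uIcc (-1 : ℝ) 1) :=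
      continuous_id.continuousOn.mul hGcont
    have hGint : (∫ y in (-1 : ℝ)..1, y * G y)
        ≤ ∫ y in (-1 : ℝ)..1,
            π⁻¹ * (y * Real.arcsin (a * y) * (Real.cos (Real.arcsin (a * y)))⁻¹) := by
      apply intervalIntegral.integral_mono_on (by norm_num)
        (hGcont'.intervalIntegrable) (hΨcont.intervalIntegrable) hGpt
    have hFTC2 := intervalIntegral.integral_eq_sub_of_hasDerivAt
      (a := (-1 : ℝ)) (b := 1)
      (f := fun y => π⁻¹ * (a⁻¹ * a⁻¹)
          * (a * y - Real.cos (Real.arcsin (a * y)) * Real.arcsin (a * y)))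
      (f' := fun y => π⁻¹ * (y * Real.arcsin (a * y) * (Real.cos (Real.arcsin (a * y)))⁻¹))
      hΨd (hΨcont.intervalIntegrable)
    have hGbound : (∫ y in (-1 : ℝ)..1, y * G y)
        ≤ π⁻¹ * (a⁻¹ * a⁻¹) * (2 * (a - Real.sqrt (1 - a ^ 2) * Real.arcsin a)) := by
      refine hGint.trans (le_of_eq ?_)
      rw [hFTC2, mul_one, mul_neg_one, Real.arcsin_neg, Real.cos_neg, Real.cos_arcsin]
      ring
    -- combine
    have hIGle : IG ≤ π⁻¹ * (a⁻¹ * a⁻¹) * (2 * (a - Real.sqrt (1 - a ^ 2) * Real.arcsin a)) := by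
      rw [hIG_def, hIGeq]
      calc ((2 : ℝ) ^ l * (Nat.factorial l : ℝ))⁻¹
            * ∫ y in (-1 : ℝ)..1, (1 - y ^ 2) ^ l * iteratedDeriv l G y
          ≤ 2⁻¹ * ∫ y in (-1 : ℝ)..1, (1 - y ^ 2) ^ 1 * iteratedDeriv 1 G y := hchain
        _ = ∫ y in (-1 : ℝ)..1, y * G y := by rw [hbase]; ring
        _ ≤ _ := hGbound
    have hfinal : C * (π⁻¹ * (a⁻¹ * a⁻¹) * (2 * (a - Real.sqrt (1 - a ^ 2) * Real.arcsin a)))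
        = 4 * π * ((N : ℝ) - 1) * (m + 1) * (1 - Real.sqrt (m * (m + 2)) * Real.arcsin a) := by
      rw [hC_def, ha_def, sqrt_algebra hm]
      field_simp
      ring
    constructor
    · rw [hSl, hIF0, zero_sub]
      rw [show C * -IG = -(C * IG) from by ring]
      rw [neg_le_neg_iff]
      calc C * IG ≤ C * (π⁻¹ * (a⁻¹ * a⁻¹) * (2 * (a - Real.sqrt (1 - a ^ 2) * Real.arcsin a))) :=
            mul_le_mul_of_nonneg_left hIGle hC0
        _ = _ := hfinal
    · rw [hSl, hIF0, zero_sub]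
      have : 0 ≤ C * IG := mul_nonneg hC0 hIG0
      linarith

/-- Bounds for `S_l(k)`, `k ≠ 0`: for even `l`, `0 ≤ S_l(k) ≤ 2π²(N−1)(m+1)·arcsin(1/(m+1))`;
for odd `l`, `−4π(N−1)(m+1)(1−√(m(m+2))·arcsin(1/(m+1))) ≤ S_l(k) ≤ 0`. -/
theorem stmt16 (m : ℝ) (hm : 0 < m) (N : ℕ) (hN : 2 ≤ N) (k : ℝ) (hk : k ≠ 0) (l : ℕ) :
    (Even l →
      0 ≤ Sl m N l k ∧
      Sl m N l k ≤ 2 * Real.pi ^ 2 * ((N : ℝ) - 1) * (m + 1) * Real.arcsin (1 / (m + 1))) ∧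
    (Odd l →
      -(4 * Real.pi * ((N : ℝ) - 1) * (m + 1) *
          (1 - Real.sqrt (m * (m + 2)) * Real.arcsin (1 / (m + 1)))) ≤ Sl m N l k ∧
      Sl m N l k ≤ 0) := by
  rcases lt_or_gt_of_ne hk with hneg | hpos
  · have h := Sl_bounds_pos m hm N hN (-k) (by linarith) l
    rw [Sl_neg_eq] at h
    exact h
  · exact Sl_bounds_pos m hm N hN k hpos l
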